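/- Let p ≥ 37 be a prime which is either of the form p = s² + st + t² − 2s − 2t for some positive integers s, t with 3 ≤ s < t < s + 1 + 2√(s+1), or of the form p = 3s² − s − 1 for some positive integer s. Then there exist positive integers S, T, A, B such that p = SA + TB, S + T > A, A = ⌊√(4p/3)⌋, A > T, T ≥ B, B ≥ A − S, and A − S ≥ 1; in particular, p is a cashew integer. -/
import Mathlib


lemma floor_sqrt_eq (n A : ℕ) (h1 : 3 * A ^ 2 ≤ 4 * n) (h2 : 4 * n < 3 * (A + 1) ^ 2) :
    ⌊Real.sqrt (4 * n / 3)⌋₊ = A := by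
  have hx : (0:ℝ) ≤ 4 * n / 3 := by positivity
  rw [Nat.floor_eq_iff (by positivity : (0:ℝ) ≤ Real.sqrt (4 * n / 3))]
  constructor
  · rw [Real.le_sqrt (by positivity)]
    rw [le_div_iff₀ (by norm_num : (0:ℝ) < 3)]
    calc ((A:ℝ))^2 * 3 = (3 * A^2 : ℕ) := by push_cast; ring
      _ ≤ (4 * n : ℕ) := by exact_mod_cast h1
      _ = 4 * n := by push_cast; ring
    exact hx
  · rw [show ((A:ℝ) + 1) = ((A+1:ℕ):ℝ) by push_cast; ring]
    rw [Real.sqrt_lt' (by positivity)]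
    rw [div_lt_iff₀ (by norm_num : (0:ℝ) < 3)]
    calc (4 * n : ℝ) = ((4*n : ℕ):ℝ) := by push_cast; ring
      _ < ((3*(A+1)^2 : ℕ):ℝ) := by exact_mod_cast h2
      _ = ((A+1:ℕ):ℝ)^2 * 3 := by push_cast; ring

/-- **Corollary.** Let `p ≥ 37` be a prime which is either of the form
`p = s² + st + t² − 2s − 2t` with `3 ≤ s < t < s + 1 + 2√(s+1)`, or of the form
`p = 3s² − s − 1` with `s` a positive integer. Then there exist positive integers
`S, T, A, B` with `p = SA + TB` and `S + T > A = ⌊√(4p/3)⌋ > T ≥ B ≥ A − S ≥ 1`;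
in particular `p` is a cashew integer, so `m(Γ₀(p)) = ⌊√(4p/3)⌋`. -/
theorem stmt16 (p : ℕ) (hp : Nat.Prime p) (hp' : 37 ≤ p)
    (hform : (∃ s t : ℕ, 0 < s ∧ 0 < t ∧ 3 ≤ s ∧ s < t ∧
        ((t : ℝ) < (s : ℝ) + 1 + 2 * Real.sqrt ((s : ℝ) + 1)) ∧
        (p : ℤ) = (s : ℤ) ^ 2 + s * t + t ^ 2 - 2 * s - 2 * t) ∨
      (∃ s : ℕ, 0 < s ∧ (p : ℤ) = 3 * (s : ℤ) ^ 2 - s - 1)) :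
    ∃ S T A B : ℕ, 0 < S ∧ 0 < T ∧ 0 < A ∧ 0 < B ∧
      p = S * A + T * B ∧ A < S + T ∧ A = ⌊Real.sqrt (4 * p / 3)⌋₊ ∧
      T < A ∧ B ≤ T ∧ (A : ℤ) - S ≤ B ∧ 1 ≤ (A : ℤ) - S := by
  rcases hform with ⟨s, t, hs0, ht0, hs3, hst, htr, hpeq⟩ | ⟨s, hs0, hpeq⟩
  · -- case 1
    set d : ℕ := t - (s + 1) with hd
    have hdr : (d : ℝ) = (t : ℝ) - s - 1 := by
      have : (d : ℤ) = (t : ℤ) - s - 1 := by omega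
      exact_mod_cast congrArg (Int.cast : ℤ → ℝ) this
    have hdlt : (d : ℝ) < 2 * Real.sqrt ((s:ℝ) + 1) := by rw [hdr]; linarith
    have hsq : Real.sqrt ((s:ℝ)+1) ^ 2 = (s:ℝ) + 1 :=
      Real.sq_sqrt (by positivity)
    have hd2r : (d:ℝ)^2 < 4 * ((s:ℝ)+1) := by
      nlinarith [Real.sqrt_nonneg ((s:ℝ)+1), Nat.cast_nonneg (α := ℝ) d]
    have hd2 : (d:ℤ)^2 ≤ 4 * s + 3 := by
      have : (d:ℤ)^2 < 4 * ((s:ℤ)+1) := by exact_mod_cast hd2r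
      linarith
    have hts : (t:ℤ) = (s:ℤ) + d + 1 := by omega
    have hs3' : (3:ℤ) ≤ s := by exact_mod_cast hs3
    refine ⟨t, s, s + t - 2, s - 2, by omega, by omega, by omega, by omega, ?_, by omega, ?_, by omega, by omega, by omega, by omega⟩
    · have hA' : ((s + t - 2 : ℕ) : ℤ) = (s:ℤ) + t - 2 := by omega
      have hB' : ((s - 2 : ℕ) : ℤ) = (s:ℤ) - 2 := by omega
      have hfin : (p:ℤ) = (t:ℤ) * ((s + t - 2 : ℕ):ℤ) + (s:ℤ) * ((s - 2 : ℕ):ℤ) := by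
        rw [hA', hB', hpeq]; ring
      exact_mod_cast hfin
    · have h1 : 3 * (s + t - 2)^2 ≤ 4 * p := by
        have hA' : ((s + t - 2 : ℕ) : ℤ) = (s:ℤ) + t - 2 := by omega
        have : (3:ℤ) * ((s + t - 2 : ℕ):ℤ)^2 ≤ 4 * p := by
          rw [hA', hpeq, hts]; nlinarith
        exact_mod_cast this
      have h2 : 4 * p < 3 * ((s + t - 2) + 1)^2 := by
        have hA' : (((s + t - 2) + 1 : ℕ) : ℤ) = (s:ℤ) + t - 1 := by omega
        have : (4:ℤ) * p < 3 * (((s + t - 2) + 1 : ℕ):ℤ)^2 := by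
          rw [hA', hpeq, hts]; nlinarith
        exact_mod_cast this
      exact (floor_sqrt_eq p _ h1 h2).symm
  · -- case 2
    have hs4 : 4 ≤ s := by
      by_contra h
      interval_cases s <;> omega
    have hs4' : (4:ℤ) ≤ s := by exact_mod_cast hs4
    refine ⟨s, s + 1, 2 * s - 1, s - 1, by omega, by omega, by omega, by omega, ?_, by omega, ?_, by omega, by omega, by omega, by omega⟩
    · have hA' : ((2 * s - 1 : ℕ) : ℤ) = 2 * (s:ℤ) - 1 := by omega
      have hB' : ((s - 1 : ℕ) : ℤ) = (s:ℤ) - 1 := by omega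
      have hfin : (p:ℤ) = (s:ℤ) * ((2 * s - 1 : ℕ):ℤ) + ((s:ℤ) + 1) * ((s - 1 : ℕ):ℤ) := by
        rw [hA', hB', hpeq]; ring
      exact_mod_cast hfin
    · have h1 : 3 * (2 * s - 1)^2 ≤ 4 * p := by
        have hA' : ((2 * s - 1 : ℕ) : ℤ) = 2 * (s:ℤ) - 1 := by omega
        have : (3:ℤ) * ((2 * s - 1 : ℕ):ℤ)^2 ≤ 4 * p := by
          rw [hA', hpeq]; nlinarith
        exact_mod_cast this
      have h2 : 4 * p < 3 * ((2 * s - 1) + 1)^2 := by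
        have hA' : (((2 * s - 1) + 1 : ℕ) : ℤ) = 2 * (s:ℤ) := by omega
        have : (4:ℤ) * p < 3 * (((2 * s - 1) + 1 : ℕ):ℤ)^2 := by
          rw [hA', hpeq]; nlinarith
        exact_mod_cast this
      exact (floor_sqrt_eq p _ h1 h2).symm
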